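/- Let G be a finite π-separable group such that for every x ∈ G the index |G : C_G(x)| is coprime to every prime in π. Then G/Z(G) is a π'-group. -/

import Mathlib

/-- `n` is a `π`-number: every prime divisor of `n` lies in `π`. -/
def IsPiNumber (π : Finset ℕ) (n : ℕ) : Prop := ∀ p : ℕ, p.Prime → p ∣ n → p ∈ π

/-- `n` is a `π'`-number: no prime divisor of `n` lies in `π`. -/
def IsPiPrimeNumber (π : Finset ℕ) (n : ℕ) : Prop := ∀ p : ℕ, p.Prime → p ∣ n → p ∉ π

/-- The `π`-exponent of `n`: the sum of the exponents of the primes of `π`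
in the factorization of `n` (so `p₁^{k₁}⋯p_s^{k_s}` is the `π`-part of `n`
and the `π`-exponent is `k₁ + ⋯ + k_s`). -/
def piExp (π : Finset ℕ) (n : ℕ) : ℕ :=
  ∑ p ∈ n.primeFactors.filter (· ∈ π), n.factorization p

/-- `ε_π(G)`: the largest `π`-exponent of a conjugacy class size in `G`. -/
noncomputable def epsPi (π : Finset ℕ) (G : Type*) [Group G] : ℕ :=
  sSup {k | ∃ x : G, piExp π (Subgroup.centralizer {x}).index = k}

/-- A group is `π`-separable if it has a normal series each of whose factors
is a `π`-group or a `π'`-group. -/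
def PiSeparable (π : Finset ℕ) (G : Type*) [Group G] : Prop :=
  ∃ (n : ℕ) (H : ℕ → Subgroup G), H 0 = ⊥ ∧ H n = ⊤ ∧
    (∀ i, H i ≤ H (i + 1)) ∧ (∀ i, (H i).Normal) ∧
    ∀ i < n,
      IsPiNumber π (Nat.card (↥(H (i + 1)) ⧸ (H i).subgroupOf (H (i + 1)))) ∨
      IsPiPrimeNumber π (Nat.card (↥(H (i + 1)) ⧸ (H i).subgroupOf (H (i + 1))))


open Subgroup

lemma my_centralizer_le_normalizer {G : Type*} [Group G] (H : Subgroup G) :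
    Subgroup.centralizer (H : Set G) ≤ Subgroup.normalizer (H : Set G) := by
  intro g hg
  rw [Subgroup.mem_normalizer_iff]
  intro h
  constructor
  · intro hh
    have e : g * h * g⁻¹ = h := by rw [← hg h hh]; group
    rw [e]; exact hh
  · intro hk
    have e3 : g * h = g * (g * h * g⁻¹) := by
      have := hg _ hk
      calc g * h = (g * h * g⁻¹) * g := by group
        _ = g * (g * h * g⁻¹) := this
    have : h = g * h * g⁻¹ := mul_left_cancel e3
    rw [this]; exact hk

lemma my_centralizer_image {G : Type*} [Group G] (φ : G ≃* G) (s : Set G) :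
    Subgroup.centralizer (⇑φ '' s) = (Subgroup.centralizer s).map φ.toMonoidHom := by
  ext x
  simp only [Subgroup.mem_map, Subgroup.mem_centralizer_iff, MulEquiv.coe_toMonoidHom]
  constructor
  · intro hx
    refine ⟨φ.symm x, fun y hy => ?_, by simp⟩
    have h1 := hx (φ y) ⟨y, hy, rfl⟩
    apply φ.injective
    simpa [map_mul] using h1
  · rintro ⟨c, hc, rfl⟩ y ⟨z, hz, rfl⟩
    rw [← map_mul, ← map_mul, hc z hz]

lemma my_cover_sylow {G : Type*} [Group G] [Finite G] {p : ℕ} [Fact p.Prime]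
    (g : G) (hK : ¬ p ∣ (Subgroup.centralizer ({g} : Set G)).index) :
    ∃ S : Sylow p G, g ∈ Subgroup.centralizer ((S : Subgroup G) : Set G) := by
  set K := Subgroup.centralizer ({g} : Set G) with hKdef
  obtain ⟨Q⟩ : Nonempty (Sylow p K) := inferInstance
  set Q' : Subgroup G := (Q : Subgroup K).map K.subtype with hQ'def
  have hQ'p : IsPGroup p Q' := Q.2.map _
  obtain ⟨S, hS⟩ := hQ'p.exists_le_sylow
  have h1 : Nat.card Q' = Nat.card Q :=
    (Nat.card_congr ((Q : Subgroup K).equivMapOfInjective _ K.subtype_injective).toEquiv).symm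
  have h2 : Nat.card Q = p ^ (Nat.card K).factorization p := Q.card_eq_multiplicity
  have h3 : Nat.card (S : Subgroup G) = p ^ (Nat.card G).factorization p := S.card_eq_multiplicity
  have h4 : Nat.card K * K.index = Nat.card G := Subgroup.card_mul_index K
  have hKne : Nat.card K ≠ 0 := Nat.card_pos.ne'
  have hIne : K.index ≠ 0 := K.index_ne_zero_of_finite
  have h5 : (Nat.card G).factorization p = (Nat.card K).factorization p := by
    rw [← h4, Nat.factorization_mul hKne hIne, Finsupp.add_apply,
      Nat.factorization_eq_zero_of_not_dvd hK, add_zero]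
  have hcard : Nat.card (S : Subgroup G) ≤ Nat.card Q' := by
    rw [h1, h2, h3, h5]
  have hQS : Q' = S := Subgroup.eq_of_le_of_card_ge hS hcard
  have hSK : (S : Subgroup G) ≤ K := hQS ▸ Subgroup.map_subtype_le _
  refine ⟨S, Subgroup.mem_centralizer_iff.mpr fun m hm => ?_⟩
  exact Subgroup.mem_centralizer_singleton_iff.mp (hSK hm)

lemma my_card_centralizer_sylow {G : Type*} [Group G] [Finite G] {p : ℕ} [Fact p.Prime]
    (P S : Sylow p G) :
    Nat.card (Subgroup.centralizer ((S : Subgroup G) : Set G)) =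
      Nat.card (Subgroup.centralizer ((P : Subgroup G) : Set G)) := by
  obtain ⟨x, hx⟩ := MulAction.exists_smul_eq G P S
  have hset : ((S : Subgroup G) : Set G) = ⇑(MulAut.conj x) '' ((P : Subgroup G) : Set G) := by
    rw [← hx, Sylow.coe_subgroup_smul, Subgroup.coe_pointwise_smul]
    rfl
  rw [hset, my_centralizer_image]
  exact (Nat.card_congr ((Subgroup.centralizer _).equivMapOfInjective _
    (MulAut.conj x).injective).toEquiv).symm

lemma my_central_sylow {G : Type*} [Group G] [Finite G] {p : ℕ} [Fact p.Prime] (P : Sylow p G)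
    (h : ∀ x : G, ¬ p ∣ (Subgroup.centralizer ({x} : Set G)).index) :
    (P : Subgroup G) ≤ Subgroup.center G := by
  classical
  cases nonempty_fintype G
  set C : Subgroup G := Subgroup.centralizer ((P : Subgroup G) : Set G) with hCdef
  suffices hC : C = ⊤ by
    intro x hx
    rw [Subgroup.mem_center_iff]
    intro g
    have hg : g ∈ C := hC ▸ Subgroup.mem_top g
    exact (hg x hx).symm
  -- counting
  set c : ℕ := Nat.card C with hc
  set i : ℕ := C.index with hi
  have hic : i * c = Nat.card G := Subgroup.index_mul_card C
  have hcpos : 1 ≤ c := Nat.one_le_iff_ne_zero.mpr Nat.card_pos.ne'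
  set d : ℕ := c - 1 with hd
  have hcd : c = d + 1 := by omega
  have hicd : i * c = i * d + i := by rw [hcd]; ring
  -- the finsets
  set F : Sylow p G → Finset G := fun S =>
    (Set.toFinite ((Subgroup.centralizer ((S : Subgroup G) : Set G) : Set G))).toFinset with hF
  have hFcard : ∀ S : Sylow p G, (F S).card = c := by
    intro S
    rw [hF]
    rw [Set.Finite.card_toFinset]
    rw [← Nat.card_eq_fintype_card]
    exact my_card_centralizer_sylow P S
  have hone : ∀ S : Sylow p G, (1 : G) ∈ F S := by
    intro S
    simp only [hF, Set.Finite.mem_toFinset, SetLike.mem_coe]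
    exact (Subgroup.centralizer _).one_mem
  have hcover : ∀ g : G, g ∈ (Finset.univ : Finset (Sylow p G)).biUnion
      (fun S => F S \ {(1 : G)}) ∪ {(1 : G)} := by
    intro g
    by_cases hg1 : g = 1
    · exact Finset.mem_union_right _ (by simp [hg1])
    · obtain ⟨S, hS⟩ := my_cover_sylow g (h g)
      refine Finset.mem_union_left _ (Finset.mem_biUnion.mpr ⟨S, Finset.mem_univ _, ?_⟩)
      simp only [Finset.mem_sdiff, Finset.mem_singleton, hF, Set.Finite.mem_toFinset,
        SetLike.mem_coe]
      exact ⟨hS, hg1⟩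
  set n : ℕ := Fintype.card (Sylow p G) with hn
  have hcardG : Fintype.card G ≤ n * d + 1 := by
    calc Fintype.card G = (Finset.univ : Finset G).card := rfl
      _ ≤ ((Finset.univ : Finset (Sylow p G)).biUnion (fun S => F S \ {(1 : G)}) ∪ {(1 : G)}).card :=
          Finset.card_le_card (fun g _ => hcover g)
      _ ≤ ((Finset.univ : Finset (Sylow p G)).biUnion (fun S => F S \ {(1 : G)})).card + 1 :=
          (Finset.card_union_le _ _).trans (by simp)
      _ ≤ (∑ S : Sylow p G, (F S \ {(1 : G)}).card) + 1 :=
          Nat.add_le_add_right (Finset.card_biUnion_le) 1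
      _ = n * d + 1 := by
          congr 1
          rw [Finset.sum_congr rfl (fun S _ => ?_), Finset.sum_const, smul_eq_mul,
            Finset.card_univ]
          rw [Finset.card_sdiff_of_subset (by simpa using hone S), hFcard S, Finset.card_singleton]
  have hnle : n ≤ i := by
    have h1 : C ≤ Subgroup.normalizer ((P : Subgroup G) : Set G) := my_centralizer_le_normalizer _
    have h2 : (Subgroup.normalizer ((P : Subgroup G) : Set G)).index ∣ C.index := Subgroup.index_dvd_of_le h1
    have h3 : n = (Subgroup.normalizer ((P : Subgroup G) : Set G)).index := by
      rw [hn, ← Nat.card_eq_fintype_card]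
      exact P.card_eq_index_normalizer
    rw [h3, hi]
    exact Nat.le_of_dvd (Nat.pos_of_ne_zero C.index_ne_zero_of_finite) h2
  have hnd : n * d ≤ i * d := Nat.mul_le_mul_right d hnle
  have hGc : Nat.card G = Fintype.card G := Nat.card_eq_fintype_card
  have e2 : i * d + i ≤ i * d + 1 := by
    calc i * d + i = i * c := hicd.symm
      _ = Nat.card G := hic
      _ = Fintype.card G := hGc
      _ ≤ n * d + 1 := hcardG
      _ ≤ i * d + 1 := Nat.add_le_add_right hnd 1
  have e3 : i ≤ 1 := Nat.le_of_add_le_add_left e2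
  have e4 : i ≠ 0 := C.index_ne_zero_of_finite
  have hi1 : i = 1 := by omega
  rw [hi] at hi1
  exact Subgroup.index_eq_one.mp hi1

theorem quotient_center_isPiPrimeGroup {G : Type*} [Group G] [Finite G]
    (π : Finset ℕ) (hsep : PiSeparable π G)
    (h : ∀ x : G, ∀ p ∈ π, ¬ p ∣ (Subgroup.centralizer {x}).index) :
    IsPiPrimeNumber π (Nat.card (G ⧸ Subgroup.center G)) := by
  intro p pp pdvd ppi
  haveI : Fact p.Prime := ⟨pp⟩
  obtain ⟨P⟩ : Nonempty (Sylow p G) := inferInstance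
  have hP : (P : Subgroup G) ≤ Subgroup.center G :=
    my_central_sylow P (fun x => h x p ppi)
  have h1 : (Subgroup.center G).index ∣ (P : Subgroup G).index :=
    Subgroup.index_dvd_of_le hP
  have h2 : Nat.card (G ⧸ Subgroup.center G) = (Subgroup.center G).index := rfl
  rw [h2] at pdvd
  exact P.not_dvd_index (pdvd.trans h1)
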